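/- Let β ≥ γ ≥ 0 with β + γ > 1 and β < 1. Then there is a constant C (depending only on β, γ) such that for all a₁, a₂ ∈ ℝ, ∫_ℝ dx / (⟨x - a₁⟩^β ⟨x - a₂⟩^γ) ≤ C ⟨a₁ - a₂⟩^{1 - β - γ}. -/

import Mathlib

open MeasureTheory

noncomputable def jb (x : ℝ) : ℝ := Real.sqrt (1 + x ^ 2)

open Set Real

set_option maxHeartbeats 1000000

lemma jb_pos (x : ℝ) : 0 < jb x := Real.sqrt_pos.2 (by positivity)
lemma one_le_jb (x : ℝ) : 1 ≤ jb x := by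
  rw [show (1:ℝ) = Real.sqrt 1 by simp]
  exact Real.sqrt_le_sqrt (by nlinarith [sq_nonneg x])
lemma jb_neg (x : ℝ) : jb (-x) = jb x := by simp [jb]
lemma one_add_abs_le (x : ℝ) : 1 + |x| ≤ Real.sqrt 2 * jb x := by
  have := one_add_norm_le_sqrt_two_mul_sqrt (E := ℝ) x
  simpa [Real.norm_eq_abs, jb] using this
lemma jb_le_one_add_abs (x : ℝ) : jb x ≤ 1 + |x| := by
  have := sqrt_one_add_norm_sq_le (E := ℝ) x
  simpa [Real.norm_eq_abs, jb] using this
lemma jb_mono {a b : ℝ} (h : |a| ≤ |b|) : jb a ≤ jb b := by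
  apply Real.sqrt_le_sqrt
  have : a ^ 2 ≤ b ^ 2 := by
    rw [← sq_abs a, ← sq_abs b]; exact pow_le_pow_left₀ (abs_nonneg a) h 2
  linarith
lemma jb_continuous : Continuous jb := by
  apply Real.continuous_sqrt.comp; continuity
lemma jb_rpow_cont (q : ℝ) : Continuous (fun x : ℝ => jb x ^ (-q)) :=
  jb_continuous.rpow_const (fun x => Or.inl (jb_pos x).ne')

-- comparison
lemma jb_rpow_le {q : ℝ} (hq : 0 ≤ q) (x : ℝ) :
    jb x ^ (-q) ≤ 2 ^ (q / 2) * (1 + |x|) ^ (-q) := by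
  have h1 : (0:ℝ) < (1 + |x|) / Real.sqrt 2 := by positivity
  have h2 : (1 + |x|) / Real.sqrt 2 ≤ jb x := by
    rw [div_le_iff₀ (by positivity : (0:ℝ) < Real.sqrt 2)]
    rw [mul_comm]; exact one_add_abs_le x
  have h3 := Real.rpow_le_rpow_of_nonpos h1 h2 (neg_nonpos.2 hq)
  refine h3.trans_eq ?_
  rw [Real.div_rpow (by positivity) (Real.sqrt_nonneg 2), Real.sqrt_eq_rpow,
    ← Real.rpow_mul (by norm_num : (0:ℝ) ≤ 2)]
  rw [show (1:ℝ)/2 * -q = -(q/2) by ring, Real.rpow_neg (by norm_num : (0:ℝ) ≤ 2)]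
  rw [div_eq_mul_inv, inv_inv]
  ring

lemma jb_rpow_eq (x p : ℝ) : jb x ^ p = (1 + x ^ 2) ^ (p / 2) := by
  rw [jb, Real.sqrt_eq_rpow, ← Real.rpow_mul (by positivity)]
  ring_nf

lemma integrable_jb {q : ℝ} (hq : 1 < q) :
    Integrable (fun x : ℝ => jb x ^ (-q)) := by
  have h := integrable_rpow_neg_one_add_norm_sq (E := ℝ) (μ := volume) (r := q)
    (by simpa using hq)
  refine h.congr (Filter.Eventually.of_forall fun x => ?_)
  show (1 + ‖x‖ ^ 2) ^ (-q / 2) = jb x ^ (-q)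
  rw [jb_rpow_eq, Real.norm_eq_abs, sq_abs]

lemma int_one_add_Ioc {q R : ℝ} (hq0 : 0 ≤ q) (hq1 : q < 1) (hR : 0 ≤ R) :
    ∫ x in (0:ℝ)..R, (1 + x) ^ (-q) ≤ (1 + R) ^ (1 - q) / (1 - q) := by
  have h1 : (∫ x in (0:ℝ)..R, (1 + x) ^ (-q)) = ∫ x in (1:ℝ)..(1+R), x ^ (-q) := by
    have := intervalIntegral.integral_comp_add_right (a := (0:ℝ)) (b := R)
      (f := fun x : ℝ => x ^ (-q)) 1
    simp only [zero_add] at this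
    rw [show (1:ℝ) + R = R + 1 by ring, ← this]
    apply intervalIntegral.integral_congr
    intro x _
    simp [add_comm]
  rw [h1, integral_rpow (Or.inl (by linarith))]
  have h2 : (0:ℝ) < 1 - q := by linarith
  rw [show -q + 1 = 1 - q by ring]
  have h3 : (1:ℝ) ^ (1 - q) = 1 := Real.one_rpow _
  rw [h3]
  gcongr
  linarith

lemma jb_int_Icc {q R : ℝ} (hq0 : 0 ≤ q) (hq1 : q < 1) (hR : 0 ≤ R) :
    ∫ x in Icc (-R) R, jb x ^ (-q) ≤ 2 * (2 ^ (q / 2) * ((1 + R) ^ (1 - q) / (1 - q))) := by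
  have hc := jb_rpow_cont q
  have hii : ∀ a b : ℝ, IntervalIntegrable (fun x => jb x ^ (-q)) volume a b :=
    fun a b => hc.intervalIntegrable a b
  have h0 : (∫ x in Icc (-R) R, jb x ^ (-q)) = ∫ x in (-R)..R, jb x ^ (-q) := by
    rw [intervalIntegral.integral_of_le (by linarith), integral_Icc_eq_integral_Ioc]
  have hsplit : (∫ x in (-R)..(0:ℝ), jb x ^ (-q)) + (∫ x in (0:ℝ)..R, jb x ^ (-q))
      = ∫ x in (-R)..R, jb x ^ (-q) :=
    intervalIntegral.integral_add_adjacent_intervals (hii _ _) (hii _ _)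
  have heven : (∫ x in (-R)..(0:ℝ), jb x ^ (-q)) = ∫ x in (0:ℝ)..R, jb x ^ (-q) := by
    have := intervalIntegral.integral_comp_neg (a := (0:ℝ)) (b := R)
      (fun x => jb x ^ (-q))
    simp only [jb_neg, neg_zero] at this
    rw [← this]
  have hbound : (∫ x in (0:ℝ)..R, jb x ^ (-q))
      ≤ 2 ^ (q / 2) * ((1 + R) ^ (1 - q) / (1 - q)) := by
    have hmono : (∫ x in (0:ℝ)..R, jb x ^ (-q))
        ≤ ∫ x in (0:ℝ)..R, 2 ^ (q / 2) * (1 + x) ^ (-q) := by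
      apply intervalIntegral.integral_mono_on hR (hii 0 R)
      · apply ContinuousOn.intervalIntegrable
        apply ContinuousOn.mul continuousOn_const
        apply ContinuousOn.rpow_const
        · fun_prop
        · intro x hx
          rw [uIcc_of_le hR] at hx
          exact Or.inl (by nlinarith [hx.1] : (1:ℝ) + x ≠ 0) |>.imp (fun h => h) (fun h => h)
      · intro x hx
        have := jb_rpow_le hq0 x
        rwa [abs_of_nonneg hx.1] at this
    refine hmono.trans ?_
    rw [intervalIntegral.integral_const_mul]
    exact mul_le_mul_of_nonneg_left (int_one_add_Ioc hq0 hq1 hR) (by positivity)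
  rw [h0, ← hsplit, heven]
  linarith

lemma preim_Ioi (R : ℝ) : (fun x : ℝ => x + 1) ⁻¹' (Ioi (R + 1)) = Ioi R := by
  ext x; simp

lemma one_add_integrableOn_Ioi {q R : ℝ} (hq : 1 < q) (hR : 0 ≤ R) :
    IntegrableOn (fun x : ℝ => (1 + x) ^ (-q)) (Ioi R) := by
  have base : IntegrableOn (fun y : ℝ => y ^ (-q)) (Ioi (R + 1)) :=
    integrableOn_Ioi_rpow_of_lt (by linarith) (by linarith)
  have mp : MeasurePreserving (fun x : ℝ => x + 1) volume volume :=
    measurePreserving_add_right volume 1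
  have emb : MeasurableEmbedding (fun x : ℝ => x + 1) :=
    (Homeomorph.addRight (1:ℝ)).measurableEmbedding
  have := (mp.integrableOn_comp_preimage emb
    (f := fun y : ℝ => y ^ (-q)) (s := Ioi (R + 1))).2 base
  rw [preim_Ioi] at this
  refine this.congr_fun (fun x _ => by simp [Function.comp, add_comm]) measurableSet_Ioi
lemma one_add_int_Ioi {q R : ℝ} (hq : 1 < q) (hR : 0 ≤ R) :
    ∫ x in Ioi R, (1 + x) ^ (-q) = (1 + R) ^ (1 - q) / (q - 1) := by
  have mp : MeasurePreserving (fun x : ℝ => x + 1) volume volume :=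
    measurePreserving_add_right volume 1
  have emb : MeasurableEmbedding (fun x : ℝ => x + 1) :=
    (Homeomorph.addRight (1:ℝ)).measurableEmbedding
  have h := mp.setIntegral_preimage_emb emb (fun y : ℝ => y ^ (-q)) (Ioi (R + 1))
  rw [preim_Ioi] at h
  have h2 : (∫ x in Ioi R, (1 + x) ^ (-q)) = ∫ x in Ioi R, (x + 1) ^ (-q) := by
    apply setIntegral_congr_fun measurableSet_Ioi
    intro x _; simp [add_comm]
  rw [h2, h, integral_Ioi_rpow_of_lt (by linarith) (by linarith)]
  rw [show -q + 1 = -(q - 1) by ring, show (1:ℝ) + R = R + 1 by ring]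
  rw [Real.rpow_neg (by linarith), show (1:ℝ) - q = -(q-1) by ring,
    Real.rpow_neg (by linarith)]
  have hpow : (0:ℝ) < (R + 1) ^ (q - 1) := Real.rpow_pos_of_pos (by linarith) _
  field_simp

lemma jb_int_Ici {q R : ℝ} (hq : 1 < q) (hR : 0 ≤ R) :
    ∫ x in Ici R, jb x ^ (-q) ≤ 2 ^ (q / 2) * ((1 + R) ^ (1 - q) / (q - 1)) := by
  have hint : IntegrableOn (fun x : ℝ => (1 + x) ^ (-q)) (Ici R) := by
    rw [integrableOn_Ici_iff_integrableOn_Ioi]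
    exact one_add_integrableOn_Ioi hq hR
  have hmono : (∫ x in Ici R, jb x ^ (-q))
      ≤ ∫ x in Ici R, 2 ^ (q / 2) * (1 + x) ^ (-q) := by
    apply setIntegral_mono_on (integrable_jb hq).integrableOn
      (hint.const_mul _) measurableSet_Ici
    intro x hx
    have := jb_rpow_le (by linarith : (0:ℝ) ≤ q) x
    rwa [abs_of_nonneg (le_trans hR hx)] at this
  refine hmono.trans ?_
  rw [MeasureTheory.integral_const_mul, integral_Ici_eq_integral_Ioi, one_add_int_Ioi hq hR]

lemma jb_int_Iic {q R : ℝ} (hq : 1 < q) (hR : 0 ≤ R) :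
    ∫ x in Iic (-R), jb x ^ (-q) ≤ 2 ^ (q / 2) * ((1 + R) ^ (1 - q) / (q - 1)) := by
  have h := integral_comp_neg_Iic (-R) (fun x => jb x ^ (-q))
  simp only [jb_neg, neg_neg] at h
  rw [h, ← integral_Ici_eq_integral_Ioi]
  exact jb_int_Ici hq hR

lemma setint_shift (f : ℝ → ℝ) (a : ℝ) (s : Set ℝ) :
    ∫ x in (fun x => x - a) ⁻¹' s, f (x - a) = ∫ y in s, f y :=
  (measurePreserving_sub_right volume a).setIntegral_preimage_emb
    (Homeomorph.subRight a).measurableEmbedding f s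

lemma piece_Icc_integrable (q c R a : ℝ) :
    Integrable ((Icc (a - R) (a + R)).indicator (fun x => c * jb (x - a) ^ (-q))) := by
  apply IntegrableOn.integrable_indicator _ measurableSet_Icc
  apply ContinuousOn.integrableOn_Icc
  apply Continuous.continuousOn
  exact continuous_const.mul ((jb_rpow_cont q).comp (continuous_sub_right a))

lemma piece_tail_integrable (s c a : ℝ) (hs : 1 < s) (S : Set ℝ) (hS : MeasurableSet S) :
    Integrable (S.indicator (fun x => c * jb (x - a) ^ (-s))) :=
  ((((integrable_jb hs).comp_sub_right a).const_mul c).integrableOn).integrable_indicator hS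

lemma piece_Icc (q c R a : ℝ) (hq0 : 0 ≤ q) (hq1 : q < 1) (hR : 0 ≤ R) (hc : 0 ≤ c) :
    ∫ x, (Icc (a - R) (a + R)).indicator (fun x => c * jb (x - a) ^ (-q)) x
      ≤ c * (2 * (2 ^ (q / 2) * ((1 + R) ^ (1 - q) / (1 - q)))) := by
  rw [integral_indicator measurableSet_Icc, MeasureTheory.integral_const_mul]
  have hset : Icc (a - R) (a + R) = (fun x => x - a) ⁻¹' (Icc (-R) R) := by
    ext x; simp only [Set.mem_Icc, Set.mem_preimage]
    constructor <;> rintro ⟨h1, h2⟩ <;> exact ⟨by linarith, by linarith⟩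
  rw [hset, setint_shift (fun y => jb y ^ (-q)) a (Icc (-R) R)]
  exact mul_le_mul_of_nonneg_left (jb_int_Icc hq0 hq1 hR) hc

lemma piece_Iic (s c R a : ℝ) (hs : 1 < s) (hR : 0 ≤ R) (hc : 0 ≤ c) :
    ∫ x, (Iic (a - R)).indicator (fun x => c * jb (x - a) ^ (-s)) x
      ≤ c * (2 ^ (s / 2) * ((1 + R) ^ (1 - s) / (s - 1))) := by
  rw [integral_indicator measurableSet_Iic, MeasureTheory.integral_const_mul]
  have hset : Iic (a - R) = (fun x => x - a) ⁻¹' (Iic (-R)) := by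
    ext x; simp only [Set.mem_Iic, Set.mem_preimage]
    constructor <;> intro h <;> linarith
  rw [hset, setint_shift (fun y => jb y ^ (-s)) a (Iic (-R))]
  exact mul_le_mul_of_nonneg_left (jb_int_Iic hs hR) hc

lemma piece_Ici (s c R a : ℝ) (hs : 1 < s) (hR : 0 ≤ R) (hc : 0 ≤ c) :
    ∫ x, (Ici (a + R)).indicator (fun x => c * jb (x - a) ^ (-s)) x
      ≤ c * (2 ^ (s / 2) * ((1 + R) ^ (1 - s) / (s - 1))) := by
  rw [integral_indicator measurableSet_Ici, MeasureTheory.integral_const_mul]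
  have hset : Ici (a + R) = (fun x => x - a) ⁻¹' (Ici R) := by
    ext x; simp only [Set.mem_Ici, Set.mem_preimage]
    constructor <;> intro h <;> linarith
  rw [hset, setint_shift (fun y => jb y ^ (-s)) a (Ici R)]
  exact mul_le_mul_of_nonneg_left (jb_int_Ici hs hR) hc

theorem stmt_2 (β γ : ℝ) (hγ : 0 ≤ γ) (hβγ : γ ≤ β) (hsum : 1 < β + γ) (hβ : β < 1) :
    ∃ C : ℝ, ∀ a₁ a₂ : ℝ,
      ∫ x : ℝ, 1 / (jb (x - a₁) ^ β * jb (x - a₂) ^ γ) ≤ C * jb (a₁ - a₂) ^ (1 - β - γ) := by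
  have hβ0 : (0:ℝ) < β := by linarith
  have hγ1 : γ < 1 := lt_of_le_of_lt hβγ hβ
  set D₁ : ℝ := (2:ℝ) ^ β * (2 * ((2:ℝ) ^ (γ / 2) * ((Real.sqrt 2) ^ (1 - γ) / (1 - γ)))) with hD₁
  set D₂ : ℝ := (2:ℝ) ^ γ * (2 * ((2:ℝ) ^ (β / 2) * ((Real.sqrt 2) ^ (1 - β) / (1 - β)))) with hD₂
  set D₃ : ℝ := (4:ℝ) ^ β * ((2:ℝ) ^ ((β + γ) / 2) * (2 ^ (β + γ - 1) / (β + γ - 1))) with hD₃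
  refine ⟨D₁ + D₂ + D₃ + D₃, fun a₁ a₂ => ?_⟩
  set t := a₁ - a₂ with ht
  set T := jb t with hT
  have Tpos : 0 < T := jb_pos t
  have T1 : 1 ≤ T := one_le_jb t
  set R := |t| / 2 with hRdef
  have hR : 0 ≤ R := by positivity
  have habs : |t| = 2 * R := by rw [hRdef]; ring
  have fA : 1 + R ≤ Real.sqrt 2 * T := by
    have h1 := one_add_abs_le t
    rw [← hT] at h1
    linarith [abs_nonneg t]
  have fB : T ≤ 2 * (1 + R) := by
    have h1 := jb_le_one_add_abs t
    rw [← hT] at h1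
    linarith
  have fC : T / 2 ≤ jb R := by
    have hR2 : R ^ 2 = t ^ 2 / 4 := by rw [hRdef, div_pow, sq_abs]; norm_num
    have hsq : T ≤ Real.sqrt (4 * (1 + R ^ 2)) := by
      rw [hT, jb]
      apply Real.sqrt_le_sqrt
      rw [hR2]; ring_nf; linarith
    have h4 : Real.sqrt (4 * (1 + R ^ 2)) = 2 * jb R := by
      rw [Real.sqrt_mul (by norm_num : (0:ℝ) ≤ 4),
        show Real.sqrt 4 = 2 by
          rw [show (4:ℝ) = 2 ^ 2 by norm_num, Real.sqrt_sq (by norm_num : (0:ℝ) ≤ 2)], jb]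
    nlinarith [hsq.trans_eq h4]
  set c₁ := (2:ℝ) ^ β * T ^ (-β) with hc₁
  set c₂ := (2:ℝ) ^ γ * T ^ (-γ) with hc₂
  set c₃ := (4:ℝ) ^ β with hc₃
  have hc₁0 : 0 ≤ c₁ := by rw [hc₁]; positivity
  have hc₂0 : 0 ≤ c₂ := by rw [hc₂]; positivity
  have hc₃0 : 0 ≤ c₃ := by rw [hc₃]; positivity
  clear_value t T R c₁ c₂ c₃
  set g₁ := (Icc (a₂ - R) (a₂ + R)).indicator (fun x => c₁ * jb (x - a₂) ^ (-γ)) with hg₁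
  set g₂ := (Icc (a₁ - R) (a₁ + R)).indicator (fun x => c₂ * jb (x - a₁) ^ (-β)) with hg₂
  set g₃ := (Iic (a₂ - R)).indicator (fun x => c₃ * jb (x - a₂) ^ (-(β + γ))) with hg₃
  set g₄ := (Ici (a₂ + R)).indicator (fun x => c₃ * jb (x - a₂) ^ (-(β + γ))) with hg₄
  have hI₁ : Integrable g₁ := by rw [hg₁]; exact piece_Icc_integrable γ c₁ R a₂
  have hI₂ : Integrable g₂ := by rw [hg₂]; exact piece_Icc_integrable β c₂ R a₁
  have hI₃ : Integrable g₃ := by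
    rw [hg₃]; exact piece_tail_integrable (β + γ) c₃ a₂ hsum _ measurableSet_Iic
  have hI₄ : Integrable g₄ := by
    rw [hg₄]; exact piece_tail_integrable (β + γ) c₃ a₂ hsum _ measurableSet_Ici
  clear_value g₁ g₂ g₃ g₄
  have hnn₁ : ∀ x, (0:ℝ) ≤ g₁ x := by
    intro x; rw [hg₁]
    exact Set.indicator_nonneg (fun y _ => mul_nonneg hc₁0 (Real.rpow_nonneg (jb_pos _).le _)) x
  have hnn₂ : ∀ x, (0:ℝ) ≤ g₂ x := by
    intro x; rw [hg₂]
    exact Set.indicator_nonneg (fun y _ => mul_nonneg hc₂0 (Real.rpow_nonneg (jb_pos _).le _)) x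
  have hnn₃ : ∀ x, (0:ℝ) ≤ g₃ x := by
    intro x; rw [hg₃]
    exact Set.indicator_nonneg (fun y _ => mul_nonneg hc₃0 (Real.rpow_nonneg (jb_pos _).le _)) x
  have hnn₄ : ∀ x, (0:ℝ) ≤ g₄ x := by
    intro x; rw [hg₄]
    exact Set.indicator_nonneg (fun y _ => mul_nonneg hc₃0 (Real.rpow_nonneg (jb_pos _).le _)) x
  have key : ∀ x, 1 / (jb (x - a₁) ^ β * jb (x - a₂) ^ γ) ≤ g₁ x + g₂ x + g₃ x + g₄ x := by
    intro x
    have hFx : 1 / (jb (x - a₁) ^ β * jb (x - a₂) ^ γ)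
        = jb (x - a₁) ^ (-β) * jb (x - a₂) ^ (-γ) := by
      rw [Real.rpow_neg (jb_pos _).le, Real.rpow_neg (jb_pos _).le, one_div, mul_inv]
    have habs2 : |t| ≤ |x - a₂| + |x - a₁| := by
      have h0 : t = (x - a₂) - (x - a₁) := by rw [ht]; ring
      rw [h0]
      exact abs_sub _ _
    by_cases h1 : x ∈ Icc (a₂ - R) (a₂ + R)
    · have hmem := h1
      rw [Set.mem_Icc] at hmem
      have hu : |x - a₂| ≤ R := by rw [abs_le]; constructor <;> linarith [hmem.1, hmem.2]
      have hv : R ≤ |x - a₁| := by linarith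
      have hjbv : T / 2 ≤ jb (x - a₁) := fC.trans (jb_mono (by rwa [abs_of_nonneg hR]))
      have hb : jb (x - a₁) ^ (-β) ≤ c₁ := by
        have h := Real.rpow_le_rpow_of_nonpos (by positivity : (0:ℝ) < T / 2) hjbv
          (neg_nonpos.2 hβ0.le)
        refine h.trans_eq ?_
        rw [hc₁, Real.div_rpow Tpos.le (by norm_num : (0:ℝ) ≤ 2),
          Real.rpow_neg (by norm_num : (0:ℝ) ≤ 2) β, div_eq_mul_inv, inv_inv, mul_comm]
      have hle : 1 / (jb (x - a₁) ^ β * jb (x - a₂) ^ γ) ≤ g₁ x := by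
        rw [hFx, hg₁, Set.indicator_of_mem h1]
        exact mul_le_mul_of_nonneg_right hb (Real.rpow_nonneg (jb_pos _).le _)
      linarith [hnn₂ x, hnn₃ x, hnn₄ x]
    · by_cases h2 : x ∈ Icc (a₁ - R) (a₁ + R)
      · have hmem := h2
        rw [Set.mem_Icc] at hmem
        have hu : |x - a₁| ≤ R := by rw [abs_le]; constructor <;> linarith [hmem.1, hmem.2]
        have hv : R ≤ |x - a₂| := by linarith
        have hjbv : T / 2 ≤ jb (x - a₂) := fC.trans (jb_mono (by rwa [abs_of_nonneg hR]))
        have hb : jb (x - a₂) ^ (-γ) ≤ c₂ := by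
          have h := Real.rpow_le_rpow_of_nonpos (by positivity : (0:ℝ) < T / 2) hjbv
            (neg_nonpos.2 hγ)
          refine h.trans_eq ?_
          rw [hc₂, Real.div_rpow Tpos.le (by norm_num : (0:ℝ) ≤ 2),
            Real.rpow_neg (by norm_num : (0:ℝ) ≤ 2) γ, div_eq_mul_inv, inv_inv, mul_comm]
        have hle : 1 / (jb (x - a₁) ^ β * jb (x - a₂) ^ γ) ≤ g₂ x := by
          rw [hFx, hg₂, Set.indicator_of_mem h2, mul_comm c₂ _]
          exact mul_le_mul_of_nonneg_left hb (Real.rpow_nonneg (jb_pos _).le _)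
        linarith [hnn₁ x, hnn₃ x, hnn₄ x]
      · rw [Set.mem_Icc] at h1 h2
        push_neg at h1 h2
        have hu : R < |x - a₂| := by
          by_contra hcon
          push_neg at hcon
          rw [abs_le] at hcon
          rcases le_or_gt (a₂ - R) x with h | h
          · linarith [h1 h, hcon.2]
          · linarith [hcon.1]
        have hv : R < |x - a₁| := by
          by_contra hcon
          push_neg at hcon
          rw [abs_le] at hcon
          rcases le_or_gt (a₁ - R) x with h | h
          · linarith [h2 h, hcon.2]
          · linarith [hcon.1]
        have hu2 : t ^ 2 / 4 ≤ (x - a₂) ^ 2 := by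
          have h := pow_le_pow_left₀ hR hu.le 2
          rw [sq_abs] at h
          rw [hRdef, div_pow, sq_abs] at h
          norm_num at h
          linarith
        have hv2 : t ^ 2 / 4 ≤ (x - a₁) ^ 2 := by
          have h := pow_le_pow_left₀ hR hv.le 2
          rw [sq_abs] at h
          rw [hRdef, div_pow, sq_abs] at h
          norm_num at h
          linarith
        have hkey : 1 + (x - a₂) ^ 2 ≤ 16 * (1 + (x - a₁) ^ 2) := by
          have e1 : x - a₁ = (x - a₂) - t := by rw [ht]; ring
          rw [e1]
          rw [e1] at hv2
          rcases le_total ((x - a₂) ^ 2) (4 * t ^ 2) with hcase | hcase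
          · nlinarith
          · nlinarith [sq_nonneg ((x - a₂) - 2 * t)]
        have hjb : jb (x - a₂) ≤ 4 * jb (x - a₁) := by
          have h := Real.sqrt_le_sqrt hkey
          rw [show jb (x - a₂) = Real.sqrt (1 + (x - a₂) ^ 2) from rfl]
          refine h.trans_eq ?_
          rw [Real.sqrt_mul (by norm_num : (0:ℝ) ≤ 16),
            show Real.sqrt 16 = 4 by
              rw [show (16:ℝ) = 4 ^ 2 by norm_num, Real.sqrt_sq (by norm_num : (0:ℝ) ≤ 4)]]
          rfl
        have hb : jb (x - a₁) ^ (-β) ≤ c₃ * jb (x - a₂) ^ (-β) := by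
          have h0 : (0:ℝ) < jb (x - a₂) / 4 := div_pos (jb_pos _) (by norm_num)
          have hle4 : jb (x - a₂) / 4 ≤ jb (x - a₁) := by linarith
          have h := Real.rpow_le_rpow_of_nonpos h0 hle4 (neg_nonpos.2 hβ0.le)
          refine h.trans_eq ?_
          rw [hc₃, Real.div_rpow (jb_pos _).le (by norm_num : (0:ℝ) ≤ 4),
            Real.rpow_neg (by norm_num : (0:ℝ) ≤ 4) β, div_eq_mul_inv, inv_inv, mul_comm]
        have hF3 : 1 / (jb (x - a₁) ^ β * jb (x - a₂) ^ γ)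
            ≤ c₃ * jb (x - a₂) ^ (-(β + γ)) := by
          rw [hFx]
          calc jb (x - a₁) ^ (-β) * jb (x - a₂) ^ (-γ)
              ≤ (c₃ * jb (x - a₂) ^ (-β)) * jb (x - a₂) ^ (-γ) :=
                mul_le_mul_of_nonneg_right hb (Real.rpow_nonneg (jb_pos _).le _)
            _ = c₃ * jb (x - a₂) ^ (-(β + γ)) := by
                rw [mul_assoc, ← Real.rpow_add (jb_pos _), show -β + -γ = -(β + γ) by ring]
        rcases lt_abs.1 hu with hcase | hcase
        · have hmem : x ∈ Ici (a₂ + R) := by rw [Set.mem_Ici]; linarith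
          have hle : 1 / (jb (x - a₁) ^ β * jb (x - a₂) ^ γ) ≤ g₄ x := by
            rw [hg₄, Set.indicator_of_mem hmem]
            exact hF3
          linarith [hnn₁ x, hnn₂ x, hnn₃ x]
        · have hmem : x ∈ Iic (a₂ - R) := by rw [Set.mem_Iic]; linarith
          have hle : 1 / (jb (x - a₁) ^ β * jb (x - a₂) ^ γ) ≤ g₃ x := by
            rw [hg₃, Set.indicator_of_mem hmem]
            exact hF3
          linarith [hnn₁ x, hnn₂ x, hnn₄ x]
  have hmono : (∫ x : ℝ, 1 / (jb (x - a₁) ^ β * jb (x - a₂) ^ γ))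
      ≤ ∫ x : ℝ, (g₁ x + g₂ x + g₃ x + g₄ x) := by
    apply integral_mono_of_nonneg
    · exact Filter.Eventually.of_forall fun x => one_div_nonneg.2
        (mul_nonneg (Real.rpow_nonneg (jb_pos _).le _) (Real.rpow_nonneg (jb_pos _).le _))
    · exact ((hI₁.add hI₂).add hI₃).add hI₄
    · exact Filter.Eventually.of_forall key
  have hsumint : (∫ x : ℝ, (g₁ x + g₂ x + g₃ x + g₄ x))
      = (∫ x, g₁ x) + (∫ x, g₂ x) + (∫ x, g₃ x) + (∫ x, g₄ x) := by
    have h12 : Integrable (fun a => g₁ a + g₂ a) (volume) := hI₁.add hI₂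
    have h123 : Integrable (fun a => g₁ a + g₂ a + g₃ a) (volume) := h12.add hI₃
    calc (∫ x : ℝ, (g₁ x + g₂ x + g₃ x + g₄ x))
        = (∫ x : ℝ, (g₁ x + g₂ x + g₃ x)) + ∫ x, g₄ x := integral_add h123 hI₄
      _ = ((∫ x : ℝ, (g₁ x + g₂ x)) + ∫ x, g₃ x) + ∫ x, g₄ x := by
          rw [integral_add h12 hI₃]
      _ = (((∫ x, g₁ x) + ∫ x, g₂ x) + ∫ x, g₃ x) + ∫ x, g₄ x := by
          rw [integral_add hI₁ hI₂]
  have hTe : ∀ a b : ℝ, T ^ a * T ^ b = T ^ (a + b) := fun a b => (Real.rpow_add Tpos a b).symm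
  have h1γ : (0:ℝ) < 1 - γ := by linarith
  have h1β : (0:ℝ) < 1 - β := by linarith
  have hs1 : (0:ℝ) < β + γ - 1 := by linarith
  have P₁ : (∫ x, g₁ x) ≤ D₁ * T ^ (1 - β - γ) := by
    rw [hg₁]
    refine (piece_Icc γ c₁ R a₂ hγ hγ1 hR hc₁0).trans ?_
    have hstep : (1 + R) ^ (1 - γ) ≤ (Real.sqrt 2) ^ (1 - γ) * T ^ (1 - γ) := by
      have h := Real.rpow_le_rpow (by positivity) fA (by linarith : (0:ℝ) ≤ 1 - γ)
      rwa [Real.mul_rpow (Real.sqrt_nonneg 2) Tpos.le] at h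
    calc c₁ * (2 * (2 ^ (γ / 2) * ((1 + R) ^ (1 - γ) / (1 - γ))))
        ≤ c₁ * (2 * (2 ^ (γ / 2) * (((Real.sqrt 2) ^ (1 - γ) * T ^ (1 - γ)) / (1 - γ)))) := by
          apply mul_le_mul_of_nonneg_left _ hc₁0
          gcongr
      _ = D₁ * T ^ (1 - β - γ) := by
          rw [hc₁, hD₁, show (1:ℝ) - β - γ = -β + (1 - γ) by ring, ← hTe]
          ring
  have P₂ : (∫ x, g₂ x) ≤ D₂ * T ^ (1 - β - γ) := by
    rw [hg₂]
    refine (piece_Icc β c₂ R a₁ hβ0.le hβ hR hc₂0).trans ?_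
    have hstep : (1 + R) ^ (1 - β) ≤ (Real.sqrt 2) ^ (1 - β) * T ^ (1 - β) := by
      have h := Real.rpow_le_rpow (by positivity) fA (by linarith : (0:ℝ) ≤ 1 - β)
      rwa [Real.mul_rpow (Real.sqrt_nonneg 2) Tpos.le] at h
    calc c₂ * (2 * (2 ^ (β / 2) * ((1 + R) ^ (1 - β) / (1 - β))))
        ≤ c₂ * (2 * (2 ^ (β / 2) * (((Real.sqrt 2) ^ (1 - β) * T ^ (1 - β)) / (1 - β)))) := by
          apply mul_le_mul_of_nonneg_left _ hc₂0
          gcongr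
      _ = D₂ * T ^ (1 - β - γ) := by
          rw [hc₂, hD₂, show (1:ℝ) - β - γ = -γ + (1 - β) by ring, ← hTe]
          ring
  have hstep3 : (1 + R) ^ (1 - (β + γ)) ≤ T ^ (1 - (β + γ)) * 2 ^ (β + γ - 1) := by
    have h0 : (0:ℝ) < T / 2 := by positivity
    have hle2 : T / 2 ≤ 1 + R := by linarith
    have h := Real.rpow_le_rpow_of_nonpos h0 hle2 (by linarith : 1 - (β + γ) ≤ 0)
    refine h.trans_eq ?_
    rw [show (1:ℝ) - (β + γ) = -(β + γ - 1) by ring,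
      Real.div_rpow Tpos.le (by norm_num : (0:ℝ) ≤ 2),
      Real.rpow_neg (by norm_num : (0:ℝ) ≤ 2) (β + γ - 1), div_eq_mul_inv, inv_inv]
  have hD3eq : c₃ * (2 ^ ((β + γ) / 2) * ((T ^ (1 - (β + γ)) * 2 ^ (β + γ - 1)) / (β + γ - 1)))
      = D₃ * T ^ (1 - β - γ) := by
    rw [hD₃, hc₃, show (1:ℝ) - (β + γ) = 1 - β - γ by ring]
    ring
  have P₃ : (∫ x, g₃ x) ≤ D₃ * T ^ (1 - β - γ) := by
    rw [hg₃]
    refine (piece_Iic (β + γ) c₃ R a₂ hsum hR hc₃0).trans ?_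
    calc c₃ * (2 ^ ((β + γ) / 2) * ((1 + R) ^ (1 - (β + γ)) / (β + γ - 1)))
        ≤ c₃ * (2 ^ ((β + γ) / 2) * ((T ^ (1 - (β + γ)) * 2 ^ (β + γ - 1)) / (β + γ - 1))) := by
          apply mul_le_mul_of_nonneg_left _ hc₃0
          gcongr
      _ = D₃ * T ^ (1 - β - γ) := hD3eq
  have P₄ : (∫ x, g₄ x) ≤ D₃ * T ^ (1 - β - γ) := by
    rw [hg₄]
    refine (piece_Ici (β + γ) c₃ R a₂ hsum hR hc₃0).trans ?_
    calc c₃ * (2 ^ ((β + γ) / 2) * ((1 + R) ^ (1 - (β + γ)) / (β + γ - 1)))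
        ≤ c₃ * (2 ^ ((β + γ) / 2) * ((T ^ (1 - (β + γ)) * 2 ^ (β + γ - 1)) / (β + γ - 1))) := by
          apply mul_le_mul_of_nonneg_left _ hc₃0
          gcongr
      _ = D₃ * T ^ (1 - β - γ) := hD3eq
  calc (∫ x : ℝ, 1 / (jb (x - a₁) ^ β * jb (x - a₂) ^ γ))
      ≤ ∫ x : ℝ, (g₁ x + g₂ x + g₃ x + g₄ x) := hmono
    _ = (∫ x, g₁ x) + (∫ x, g₂ x) + (∫ x, g₃ x) + (∫ x, g₄ x) := hsumint
    _ ≤ (D₁ + D₂ + D₃ + D₃) * T ^ (1 - β - γ) := by linarith
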